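/- For every k ∈ ℕ₀ there exists a polynomial p_k of degree k with positive coefficients, with p_0 = 1 and p_k(0) = 0 for k ≥ 1, such that Σ_{n∈ℤ} n^{2k} I_n(t) = e^t p_k(t) for all t > 0. -/

import Mathlib

noncomputable def besselI (n : ℤ) (t : ℝ) : ℝ :=
  ∑' m : ℕ, (1 / ((m.factorial : ℝ) * Real.Gamma ((m : ℝ) + n.natAbs + 1))) *
    (t / 2) ^ (2 * m + n.natAbs)

noncomputable def discreteHeat (f : ℤ → ℝ) (t : ℝ) (n : ℤ) : ℝ :=
  ∑' j : ℤ, Real.exp (-2 * t) * besselI j (2 * t) * f (n - j)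

open Finset

/-! ### The moment polynomials -/

noncomputable def skelP : ℕ → Polynomial ℝ
  | 0 => 1
  | (k+1) => Polynomial.X * ∑ l ∈ Finset.range (k+1),
      (((2*k+1).choose (2*l+1) : ℝ)) • skelP (k - l)

lemma skelP_zero : skelP 0 = 1 := by rw [skelP]

lemma skelP_succ (k : ℕ) : skelP (k+1) = Polynomial.X * ∑ l ∈ Finset.range (k+1),
    (((2*k+1).choose (2*l+1) : ℝ)) • skelP (k - l) := by rw [skelP]

lemma skelP_good (k : ℕ) : (∀ i, 0 ≤ (skelP k).coeff i) ∧ 0 < (skelP k).coeff k ∧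
    (∀ i, k < i → (skelP k).coeff i = 0) := by
  induction k using Nat.strong_induction_on with
  | _ k ih =>
    match k with
    | 0 =>
      refine ⟨fun i => ?_, ?_, fun i hi => ?_⟩
      · rcases Nat.eq_zero_or_pos i with h | h
        · simp [skelP_zero, h]
        · simp [skelP_zero, Polynomial.coeff_one, Nat.pos_iff_ne_zero.mp h]
      · simp [skelP_zero]
      · simp [skelP_zero, Polynomial.coeff_one, (Nat.pos_iff_ne_zero.mp hi)]
    | (k+1) =>
      set Q : Polynomial ℝ := ∑ l ∈ Finset.range (k+1),
        (((2*k+1).choose (2*l+1) : ℝ)) • skelP (k - l) with hQ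
      have hco : ∀ i, (skelP (k+1)).coeff (i+1) = Q.coeff i := by
        intro i
        rw [skelP_succ, ← hQ, Polynomial.coeff_X_mul]
      have hc0 : (skelP (k+1)).coeff 0 = 0 := by
        rw [skelP_succ, ← hQ, Polynomial.mul_coeff_zero]
        simp
      have hQco : ∀ i, Q.coeff i = ∑ l ∈ Finset.range (k+1),
          (((2*k+1).choose (2*l+1) : ℝ)) * (skelP (k-l)).coeff i := by
        intro i; rw [hQ, Polynomial.finset_sum_coeff]
        exact Finset.sum_congr rfl fun l _ => by simp
      have hQnn : ∀ i, 0 ≤ Q.coeff i := by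
        intro i; rw [hQco]
        apply Finset.sum_nonneg
        intro l hl
        exact mul_nonneg (by positivity) ((ih (k-l) (by omega)).1 i)
      have hQhigh : ∀ i, k < i → Q.coeff i = 0 := by
        intro i hi; rw [hQco]
        apply Finset.sum_eq_zero
        intro l hl
        rw [(ih (k-l) (by omega)).2.2 i (by omega), mul_zero]
      have hQk : 0 < Q.coeff k := by
        rw [hQco]
        have h0 : ∀ l ∈ Finset.range (k+1),
            0 ≤ (((2*k+1).choose (2*l+1) : ℝ)) * (skelP (k-l)).coeff k :=
          fun l hl => mul_nonneg (by positivity) ((ih (k-l) (by omega)).1 k)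
        apply Finset.sum_pos' h0
        refine ⟨0, Finset.mem_range.mpr (by omega), ?_⟩
        simp only [Nat.sub_zero]
        apply mul_pos
        · have : (2*k+1).choose 1 = 2*k+1 := Nat.choose_one_right _
          simp [this]; positivity
        · exact (ih k (by omega)).2.1
      refine ⟨fun i => ?_, ?_, fun i hi => ?_⟩
      · rcases i with _ | i
        · rw [hc0]
        · rw [hco]; exact hQnn _
      · rw [hco]; exact hQk
      · rcases i with _ | i
        · omega
        · rw [hco]; exact hQhigh _ (by omega)

lemma skelP_natDegree (k : ℕ) : (skelP k).natDegree = k := by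
  obtain ⟨h1, h2, h3⟩ := skelP_good k
  apply le_antisymm
  · exact Polynomial.natDegree_le_iff_coeff_eq_zero.mpr fun i hi => h3 i hi
  · exact Polynomial.le_natDegree_of_ne_zero (ne_of_gt h2)

/-! ### The double-sum machinery -/

noncomputable def ee (t : ℝ) (a : ℕ) : ℝ := (t/2)^a / a.factorial

noncomputable def FF (j : ℕ) (d : ℝ) (t : ℝ) (p : ℕ × ℕ) : ℝ :=
  ((p.1 : ℝ) - p.2 + d)^j * ee t p.1 * ee t p.2

noncomputable def TT (j : ℕ) (t : ℝ) : ℝ := ∑' p : ℕ × ℕ, FF j 0 t p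

lemma ee_nonneg {t : ℝ} (ht : 0 ≤ t) (a : ℕ) : 0 ≤ ee t a := by
  unfold ee; positivity

lemma summable_ee (c : ℝ) : Summable (fun a : ℕ => c^a / a.factorial) :=
  Real.summable_pow_div_factorial c

lemma summable_ee_mul (c t : ℝ) (hc : 0 ≤ c) (ht : 0 ≤ t) :
    Summable (fun p : ℕ × ℕ => c ^ (p.1 + p.2) * (ee t p.1 * ee t p.2)) := by
  have h := (summable_ee (c*(t/2))).mul_of_nonneg (summable_ee (c*(t/2)))
    (fun a => by positivity) (fun a => by positivity)
  apply h.congr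
  intro p
  simp only [ee, mul_pow, pow_add]
  ring

lemma summable_of_bound (g : ℕ × ℕ → ℝ) (C c t : ℝ) (hc : 0 ≤ c) (ht : 0 ≤ t)
    (hg : ∀ p : ℕ × ℕ, |g p| ≤ C * c ^ (p.1 + p.2)) :
    Summable (fun p : ℕ × ℕ => g p * ee t p.1 * ee t p.2) := by
  apply Summable.of_abs
  refine Summable.of_nonneg_of_le (fun p => abs_nonneg _) ?_
    ((summable_ee_mul c t hc ht).mul_left C)
  intro p
  rw [abs_mul, abs_mul, abs_of_nonneg (ee_nonneg ht p.1), abs_of_nonneg (ee_nonneg ht p.2)]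
  have := hg p
  calc |g p| * ee t p.1 * ee t p.2 ≤ C * c ^ (p.1+p.2) * ee t p.1 * ee t p.2 := by
        apply mul_le_mul_of_nonneg_right _ (ee_nonneg ht p.2)
        exact mul_le_mul_of_nonneg_right this (ee_nonneg ht p.1)
    _ = C * (c ^ (p.1+p.2) * (ee t p.1 * ee t p.2)) := by ring

lemma abs_shift_le (d : ℝ) (hd : |d| ≤ 1) (p : ℕ × ℕ) :
    |((p.1 : ℝ) - p.2 + d)| ≤ 2 * 2 ^ (p.1 + p.2) := by
  have h1 : |((p.1 : ℝ) - p.2)| ≤ (p.1 : ℝ) + p.2 := by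
    rw [abs_sub_le_iff]
    constructor <;> [nlinarith [Nat.cast_nonneg (α := ℝ) p.1, Nat.cast_nonneg (α := ℝ) p.2];
      nlinarith [Nat.cast_nonneg (α := ℝ) p.1, Nat.cast_nonneg (α := ℝ) p.2]]
  have h2 : ((p.1 : ℝ) + p.2) + 1 ≤ 2 * 2 ^ (p.1 + p.2) := by
    have := Nat.lt_two_pow_self (n := p.1 + p.2)
    have h3 : ((p.1 + p.2 : ℕ) : ℝ) + 1 ≤ (2:ℝ) ^ (p.1 + p.2) := by
      have : ((p.1 + p.2 : ℕ) : ℝ) + 1 ≤ ((2^(p.1+p.2) : ℕ) : ℝ) := by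
        exact_mod_cast this
      simpa using this
    push_cast at h3 ⊢
    nlinarith [pow_nonneg (by norm_num : (0:ℝ) ≤ 2) (p.1 + p.2)]
  calc |((p.1 : ℝ) - p.2 + d)| ≤ |((p.1 : ℝ) - p.2)| + |d| := abs_add_le _ _
    _ ≤ ((p.1 : ℝ) + p.2) + 1 := add_le_add h1 hd
    _ ≤ 2 * 2 ^ (p.1 + p.2) := h2

lemma abs_shift_pow_le (j : ℕ) (d : ℝ) (hd : |d| ≤ 1) (p : ℕ × ℕ) :
    |((p.1 : ℝ) - p.2 + d)^j| ≤ 2^j * ((2:ℝ)^j) ^ (p.1 + p.2) := by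
  rw [abs_pow]
  calc |((p.1 : ℝ) - p.2 + d)|^j ≤ (2 * 2 ^ (p.1 + p.2))^j :=
        pow_le_pow_left₀ (abs_nonneg _) (abs_shift_le d hd p) j
    _ = 2^j * ((2:ℝ)^j) ^ (p.1 + p.2) := by
        rw [mul_pow, ← pow_mul, ← pow_mul, Nat.mul_comm]

lemma summable_FF (j : ℕ) (d t : ℝ) (hd : |d| ≤ 1) (ht : 0 ≤ t) :
    Summable (FF j d t) := by
  apply summable_of_bound _ (2^j) ((2:ℝ)^j) t (by positivity) ht
  exact fun p => abs_shift_pow_le j d hd p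

lemma summable_fst_FF (j : ℕ) (t : ℝ) (ht : 0 ≤ t) :
    Summable (fun p : ℕ × ℕ => (p.1 : ℝ) * FF j 0 t p) := by
  have : Summable (fun p : ℕ × ℕ =>
      ((p.1 : ℝ) * ((p.1 : ℝ) - p.2 + 0)^j) * ee t p.1 * ee t p.2) := by
    apply summable_of_bound _ (2^(j+1)) ((2:ℝ)^(j+1)) t (by positivity) ht
    intro p
    rw [abs_mul]
    have h1 : |(p.1 : ℝ)| ≤ 2 * 2 ^ (p.1 + p.2) := by
      rw [abs_of_nonneg (Nat.cast_nonneg _)]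
      have hl := Nat.lt_two_pow_self (n := p.1 + p.2)
      have h3 : ((p.1 + p.2 : ℕ) : ℝ) + 1 ≤ ((2^(p.1+p.2) : ℕ) : ℝ) := by exact_mod_cast hl
      push_cast at h3 ⊢
      nlinarith [pow_nonneg (by norm_num : (0:ℝ) ≤ 2) (p.1 + p.2),
        Nat.cast_nonneg (α := ℝ) p.2]
    have h2 := abs_shift_pow_le j 0 (by norm_num) p
    calc |(p.1:ℝ)| * |((p.1 : ℝ) - p.2 + 0)^j| ≤
          (2 * 2 ^ (p.1 + p.2)) * (2^j * ((2:ℝ)^j) ^ (p.1 + p.2)) :=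
          mul_le_mul h1 h2 (abs_nonneg _) (by positivity)
      _ = 2^(j+1) * ((2:ℝ)^(j+1)) ^ (p.1 + p.2) := by
          rw [← pow_mul, ← pow_mul]
          ring
  apply this.congr
  intro p
  unfold FF
  ring

lemma summable_snd_FF (j : ℕ) (t : ℝ) (ht : 0 ≤ t) :
    Summable (fun p : ℕ × ℕ => (p.2 : ℝ) * FF j 0 t p) := by
  have : Summable (fun p : ℕ × ℕ =>
      ((p.2 : ℝ) * ((p.1 : ℝ) - p.2 + 0)^j) * ee t p.1 * ee t p.2) := by
    apply summable_of_bound _ (2^(j+1)) ((2:ℝ)^(j+1)) t (by positivity) ht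
    intro p
    rw [abs_mul]
    have h1 : |(p.2 : ℝ)| ≤ 2 * 2 ^ (p.1 + p.2) := by
      rw [abs_of_nonneg (Nat.cast_nonneg _)]
      have hl := Nat.lt_two_pow_self (n := p.1 + p.2)
      have h3 : ((p.1 + p.2 : ℕ) : ℝ) + 1 ≤ ((2^(p.1+p.2) : ℕ) : ℝ) := by exact_mod_cast hl
      push_cast at h3 ⊢
      nlinarith [pow_nonneg (by norm_num : (0:ℝ) ≤ 2) (p.1 + p.2),
        Nat.cast_nonneg (α := ℝ) p.1]
    have h2 := abs_shift_pow_le j 0 (by norm_num) p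
    calc |(p.2:ℝ)| * |((p.1 : ℝ) - p.2 + 0)^j| ≤
          (2 * 2 ^ (p.1 + p.2)) * (2^j * ((2:ℝ)^j) ^ (p.1 + p.2)) :=
          mul_le_mul h1 h2 (abs_nonneg _) (by positivity)
      _ = 2^(j+1) * ((2:ℝ)^(j+1)) ^ (p.1 + p.2) := by
          rw [← pow_mul, ← pow_mul]
          ring
  apply this.congr
  intro p
  unfold FF
  ring

/-! ### Base case: `TT 0 t = exp t` -/

lemma exp_hasSum (x : ℝ) : HasSum (fun n : ℕ => x^n / n.factorial) (Real.exp x) := by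
  have h := (Real.summable_pow_div_factorial x).hasSum
  have : ∑' n : ℕ, x^n / n.factorial = Real.exp x := by
    rw [Real.exp_eq_exp_ℝ, NormedSpace.exp_eq_tsum_div]
  rwa [this] at h

lemma TT_zero (t : ℝ) (ht : 0 ≤ t) : TT 0 t = Real.exp t := by
  have h1 : HasSum (fun a : ℕ => ee t a) (Real.exp (t/2)) := exp_hasSum (t/2)
  have hsum : Summable (fun p : ℕ × ℕ => ee t p.1 * ee t p.2) :=
    h1.summable.mul_of_nonneg h1.summable (ee_nonneg ht) (ee_nonneg ht)
  have h2 : HasSum (fun p : ℕ × ℕ => ee t p.1 * ee t p.2) (Real.exp (t/2) * Real.exp (t/2)) :=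
    h1.mul h1 hsum
  have h3 : TT 0 t = Real.exp (t/2) * Real.exp (t/2) := by
    rw [TT, ← h2.tsum_eq]
    apply tsum_congr
    intro p
    unfold FF
    simp
  rw [h3, ← Real.exp_add]
  norm_num

/-! ### The shift identities -/

lemma ee_succ (t : ℝ) (a : ℕ) : ((a:ℝ)+1) * ee t (a+1) = (t/2) * ee t a := by
  unfold ee
  rw [Nat.factorial_succ, pow_succ]
  push_cast
  have h1 : ((a:ℝ)+1) ≠ 0 := by positivity
  have h2 : (a.factorial : ℝ) ≠ 0 := Nat.cast_ne_zero.mpr a.factorial_ne_zero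
  field_simp

lemma tsum_fst_shift (j : ℕ) (t : ℝ) (ht : 0 ≤ t) :
    ∑' p : ℕ × ℕ, (p.1 : ℝ) * FF j 0 t p = (t/2) * ∑' p : ℕ × ℕ, FF j 1 t p := by
  have hinj : Function.Injective (fun p : ℕ × ℕ => (p.1 + 1, p.2)) := by
    intro p q h
    simp only [Prod.mk.injEq] at h
    exact Prod.ext (by omega) h.2
  have hsupp : Function.support (fun p : ℕ × ℕ => (p.1 : ℝ) * FF j 0 t p) ⊆
      Set.range (fun p : ℕ × ℕ => (p.1 + 1, p.2)) := by
    intro p hp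
    rcases Nat.eq_zero_or_pos p.1 with h | h
    · exfalso; apply hp; simp [h]
    · exact ⟨(p.1 - 1, p.2), by simp [Prod.ext_iff]; omega⟩
  have key := Function.Injective.tsum_eq hinj hsupp
  rw [← key]
  rw [← tsum_mul_left]
  apply tsum_congr
  intro p
  show ((p.1 + 1 : ℕ) : ℝ) * FF j 0 t (p.1+1, p.2) = (t/2) * FF j 1 t p
  unfold FF
  simp only
  push_cast
  have h1 : ((p.1:ℝ)+1) * ee t (p.1+1) = (t/2) * ee t p.1 := ee_succ t p.1
  have h2 : ((p.1:ℝ) + 1 - p.2 + 0) = ((p.1:ℝ) - p.2 + 1) := by ring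
  rw [h2]
  calc ((p.1:ℝ)+1) * (((p.1:ℝ) - p.2 + 1)^j * ee t (p.1+1) * ee t p.2)
      = ((p.1:ℝ) - p.2 + 1)^j * (((p.1:ℝ)+1) * ee t (p.1+1)) * ee t p.2 := by ring
    _ = ((p.1:ℝ) - p.2 + 1)^j * ((t/2) * ee t p.1) * ee t p.2 := by rw [h1]
    _ = (t/2) * (((p.1:ℝ) - p.2 + 1)^j * ee t p.1 * ee t p.2) := by ring

lemma tsum_snd_shift (j : ℕ) (t : ℝ) (ht : 0 ≤ t) :
    ∑' p : ℕ × ℕ, (p.2 : ℝ) * FF j 0 t p = (t/2) * ∑' p : ℕ × ℕ, FF j (-1) t p := by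
  have hinj : Function.Injective (fun p : ℕ × ℕ => (p.1, p.2 + 1)) := by
    intro p q h
    simp only [Prod.mk.injEq] at h
    exact Prod.ext h.1 (by omega)
  have hsupp : Function.support (fun p : ℕ × ℕ => (p.2 : ℝ) * FF j 0 t p) ⊆
      Set.range (fun p : ℕ × ℕ => (p.1, p.2 + 1)) := by
    intro p hp
    rcases Nat.eq_zero_or_pos p.2 with h | h
    · exfalso; apply hp; simp [h]
    · exact ⟨(p.1, p.2 - 1), by simp [Prod.ext_iff]; omega⟩
  have key := Function.Injective.tsum_eq hinj hsupp
  rw [← key]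
  rw [← tsum_mul_left]
  apply tsum_congr
  intro p
  show ((p.2 + 1 : ℕ) : ℝ) * FF j 0 t (p.1, p.2+1) = (t/2) * FF j (-1) t p
  unfold FF
  simp only
  push_cast
  have h1 : ((p.2:ℝ)+1) * ee t (p.2+1) = (t/2) * ee t p.2 := ee_succ t p.2
  have h2 : ((p.1:ℝ) - ((p.2:ℝ) + 1) + 0) = ((p.1:ℝ) - p.2 + (-1)) := by ring
  rw [h2]
  calc ((p.2:ℝ)+1) * (((p.1:ℝ) - p.2 + (-1))^j * ee t p.1 * ee t (p.2+1))
      = ((p.1:ℝ) - p.2 + (-1))^j * ee t p.1 * (((p.2:ℝ)+1) * ee t (p.2+1)) := by ring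
    _ = ((p.1:ℝ) - p.2 + (-1))^j * ee t p.1 * ((t/2) * ee t p.2) := by rw [h1]
    _ = (t/2) * (((p.1:ℝ) - p.2 + (-1))^j * ee t p.1 * ee t p.2) := by ring

/-! ### The recurrence -/

lemma FF_diff_expand (j : ℕ) (t : ℝ) (p : ℕ × ℕ) :
    FF j 1 t p - FF j (-1) t p = ∑ i ∈ Finset.range (j+1),
      ((j.choose i : ℝ) * (1 - (-1:ℝ)^(j-i))) * FF i 0 t p := by
  unfold FF
  have hx : ∀ y : ℝ, (y + 1)^j - (y + (-1))^j =
      ∑ i ∈ Finset.range (j+1), ((j.choose i : ℝ) * (1 - (-1:ℝ)^(j-i))) * y^i := by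
    intro y
    rw [add_pow, add_pow]
    rw [← Finset.sum_sub_distrib]
    apply Finset.sum_congr rfl
    intro i hi
    ring
  have := hx ((p.1:ℝ) - p.2)
  calc ((p.1:ℝ) - p.2 + 1)^j * ee t p.1 * ee t p.2
        - ((p.1:ℝ) - p.2 + (-1))^j * ee t p.1 * ee t p.2
      = (((p.1:ℝ) - p.2 + 1)^j - ((p.1:ℝ) - p.2 + (-1))^j) * ee t p.1 * ee t p.2 := by ring
    _ = (∑ i ∈ Finset.range (j+1), ((j.choose i : ℝ) * (1 - (-1:ℝ)^(j-i)))
          * ((p.1:ℝ) - p.2)^i) * ee t p.1 * ee t p.2 := by rw [this]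
    _ = _ := by
        rw [Finset.sum_mul, Finset.sum_mul]
        apply Finset.sum_congr rfl
        intro i hi
        ring

lemma TT_rec (j : ℕ) (t : ℝ) (ht : 0 ≤ t) :
    TT (j+1) t = (t/2) * ∑ i ∈ Finset.range (j+1),
      ((j.choose i : ℝ) * (1 - (-1:ℝ)^(j-i))) * TT i t := by
  have hA := summable_fst_FF j t ht
  have hB := summable_snd_FF j t ht
  have h1 : TT (j+1) t = (∑' p : ℕ × ℕ, (p.1 : ℝ) * FF j 0 t p)
      - ∑' p : ℕ × ℕ, (p.2 : ℝ) * FF j 0 t p := by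
    rw [TT, ← Summable.tsum_sub hA hB]
    apply tsum_congr
    intro p
    unfold FF
    rw [pow_succ]
    ring
  rw [h1, tsum_fst_shift j t ht, tsum_snd_shift j t ht, ← mul_sub]
  congr 1
  have hS1 := summable_FF j 1 t (by norm_num) ht
  have hSm1 := summable_FF j (-1) t (by norm_num) ht
  rw [← Summable.tsum_sub hS1 hSm1]
  have h2 : ∀ p : ℕ × ℕ, FF j 1 t p - FF j (-1) t p = ∑ i ∈ Finset.range (j+1),
      ((j.choose i : ℝ) * (1 - (-1:ℝ)^(j-i))) * FF i 0 t p := FF_diff_expand j t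
  rw [tsum_congr h2]
  rw [Summable.tsum_finsetSum (fun i _ => ((summable_FF i 0 t (by norm_num) ht).mul_left _))]
  apply Finset.sum_congr rfl
  intro i hi
  rw [tsum_mul_left]
  rfl

/-! ### Even/odd splitting of sums -/

lemma sum_range_even_odd (g : ℕ → ℝ) (m : ℕ) :
    ∑ i ∈ Finset.range (2*m), g i = ∑ l ∈ Finset.range m, (g (2*l) + g (2*l+1)) := by
  induction m with
  | zero => simp
  | succ m ih =>
    have : 2*(m+1) = (2*m+1)+1 := by ring
    rw [this, Finset.sum_range_succ, Finset.sum_range_succ, ih, Finset.sum_range_succ,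
      add_assoc]

/-! ### Main identity: `TT (2k) t = exp t * (skelP k).eval t` -/

lemma TT_eval (k : ℕ) (t : ℝ) (ht : 0 ≤ t) :
    TT (2*k) t = Real.exp t * (skelP k).eval t := by
  induction k using Nat.strong_induction_on with
  | _ k ih =>
    match k with
    | 0 => simp [TT_zero t ht, skelP_zero]
    | (K+1) =>
      have h2 : 2*(K+1) = (2*K+1)+1 := by ring
      rw [h2, TT_rec (2*K+1) t ht]
      have h3 : (2*K+1)+1 = 2*(K+1) := by ring
      rw [h3, sum_range_even_odd]
      have hodd : ∀ l ∈ Finset.range (K+1),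
          (((2*K+1).choose (2*l) : ℝ) * (1 - (-1:ℝ)^(2*K+1-2*l))) * TT (2*l) t
          + (((2*K+1).choose (2*l+1) : ℝ) * (1 - (-1:ℝ)^(2*K+1-(2*l+1)))) * TT (2*l+1) t
          = 2 * ((2*K+1).choose (2*l) : ℝ) * (Real.exp t * (skelP l).eval t) := by
        intro l hl
        have hlK : l ≤ K := by
          have := Finset.mem_range.mp hl; omega
        have hoddexp : (-1:ℝ)^(2*K+1-2*l) = -1 := by
          have : 2*K+1-2*l = 2*(K-l)+1 := by omega
          rw [this]
          exact Odd.neg_one_pow ⟨K-l, by ring⟩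
        have hevenexp : (-1:ℝ)^(2*K+1-(2*l+1)) = 1 := by
          have : 2*K+1-(2*l+1) = 2*(K-l) := by omega
          rw [this]
          exact Even.neg_one_pow ⟨K-l, by ring⟩
        rw [hoddexp, hevenexp, ih l (by omega) ]
        ring
      rw [Finset.sum_congr rfl hodd]
      have h4 : (skelP (K+1)).eval t = t * ∑ l ∈ Finset.range (K+1),
          ((2*K+1).choose (2*l+1) : ℝ) * (skelP (K-l)).eval t := by
        rw [skelP_succ]
        simp [Polynomial.eval_finset_sum]
      rw [h4]
      have h5 : ∑ l ∈ Finset.range (K+1), ((2*K+1).choose (2*l+1) : ℝ) * (skelP (K-l)).eval t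
          = ∑ l ∈ Finset.range (K+1), ((2*K+1).choose (2*l) : ℝ) * (skelP l).eval t := by
        rw [← Finset.sum_range_reflect]
        apply Finset.sum_congr rfl
        intro l hl
        have hlK : l ≤ K := by have := Finset.mem_range.mp hl; omega
        have e1 : K + 1 - 1 - l = K - l := by omega
        rw [e1]
        have e2 : K - (K - l) = l := by omega
        rw [e2]
        have e3 : (2*K+1).choose (2*(K-l)+1) = (2*K+1).choose (2*l) := by
          have h' : 2*(K-l)+1 = 2*K+1 - 2*l := by omega
          rw [h']
          exact Nat.choose_symm (by omega)
        rw [e3]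
      rw [h5]
      rw [Finset.mul_sum, Finset.mul_sum, Finset.mul_sum]
      apply Finset.sum_congr rfl
      intro l hl
      ring

/-! ### Relating the double sum to the Bessel sum -/

lemma besselI_hasSum (n : ℤ) (t : ℝ) :
    HasSum (fun m : ℕ => (t/2)^(2*m + n.natAbs) / ((m.factorial : ℝ) * (m + n.natAbs).factorial))
      (besselI n t) := by
  have hfun : ∀ m : ℕ, (1 / ((m.factorial : ℝ) * Real.Gamma ((m : ℝ) + n.natAbs + 1))) *
      (t / 2) ^ (2 * m + n.natAbs)
      = (t/2)^(2*m + n.natAbs) / ((m.factorial : ℝ) * (m + n.natAbs).factorial) := by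
    intro m
    have : ((m : ℝ) + n.natAbs + 1) = ((m + n.natAbs : ℕ) : ℝ) + 1 := by push_cast; ring
    rw [this, Real.Gamma_nat_eq_factorial]
    ring
  have hsumm : Summable (fun m : ℕ =>
      (t/2)^(2*m + n.natAbs) / ((m.factorial : ℝ) * (m + n.natAbs).factorial)) := by
    apply Summable.of_abs
    refine Summable.of_nonneg_of_le (fun m => abs_nonneg _) ?_
      ((summable_ee |(t/2)^2|).mul_left (|t/2|^n.natAbs))
    intro m
    have habs : |(t/2)^(2*m + n.natAbs) / ((m.factorial : ℝ) * (m + n.natAbs).factorial)|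
        = |t/2|^(2*m + n.natAbs) / ((m.factorial : ℝ) * (m + n.natAbs).factorial) := by
      rw [abs_div, abs_pow, abs_of_pos (show (0:ℝ) < (m.factorial : ℝ) * (m + n.natAbs).factorial
        by positivity)]
    rw [habs]
    have h1 : |t/2|^(2*m + n.natAbs) = |t/2|^n.natAbs * |(t/2)^2|^m := by
      rw [abs_pow (t/2) 2, ← pow_mul, ← pow_add, Nat.add_comm]
    rw [h1]
    have hf1 : (1:ℝ) ≤ ((m + n.natAbs).factorial : ℝ) := by
      exact_mod_cast (m + n.natAbs).factorial_pos
    rw [div_le_iff₀ (show (0:ℝ) < (m.factorial : ℝ) * ((m + n.natAbs).factorial : ℝ)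
      by positivity)]
    have hrw : |t/2|^n.natAbs * (|(t/2)^2|^m / m.factorial)
        * ((m.factorial : ℝ) * (m + n.natAbs).factorial)
        = (|t/2|^n.natAbs * |(t/2)^2|^m) * ((m + n.natAbs).factorial : ℝ) := by
      have hfm : (m.factorial : ℝ) ≠ 0 := Nat.cast_ne_zero.mpr m.factorial_ne_zero
      field_simp
    rw [hrw]
    exact le_mul_of_one_le_right (by positivity) hf1
  have : besselI n t = ∑' m : ℕ,
      (t/2)^(2*m + n.natAbs) / ((m.factorial : ℝ) * (m + n.natAbs).factorial) := by
    rw [besselI]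
    exact tsum_congr hfun
  rw [this]
  exact hsumm.hasSum

def zEquiv : ℤ × ℕ ≃ ℕ × ℕ where
  toFun p := (p.2 + p.1.toNat, p.2 + (-p.1).toNat)
  invFun q := ((q.1 : ℤ) - q.2, min q.1 q.2)
  left_inv := by
    rintro ⟨n, m⟩
    simp only [Prod.mk.injEq]
    constructor <;> [push_cast; skip] <;> omega
  right_inv := by
    rintro ⟨a, b⟩
    simp only [Prod.mk.injEq]
    constructor <;> omega

lemma FF_zEquiv (k : ℕ) (t : ℝ) (n : ℤ) (m : ℕ) :
    FF (2*k) 0 t (zEquiv (n, m)) = (n:ℝ)^(2*k) *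
      ((t/2)^(2*m + n.natAbs) / ((m.factorial : ℝ) * (m + n.natAbs).factorial)) := by
  show FF (2*k) 0 t (m + n.toNat, m + (-n).toNat) = _
  unfold FF ee
  simp only
  have hcast : ((m + n.toNat : ℕ) : ℝ) - ((m + (-n).toNat : ℕ) : ℝ) + 0 = (n : ℝ) := by
    push_cast
    have : ((n.toNat : ℤ) : ℝ) - (((-n).toNat : ℤ) : ℝ) = (n : ℝ) := by
      rw [← Int.cast_sub]
      congr 1
      omega
    push_cast at this
    linarith
  rw [hcast]
  rcases le_or_gt 0 n with h | h
  · have h1 : n.toNat = n.natAbs := by omega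
    have h2 : (-n).toNat = 0 := by omega
    rw [h1, h2]
    have h3 : 2*m + n.natAbs = (m + n.natAbs) + m := by ring
    rw [h3, pow_add]
    simp only [Nat.add_zero]
    field_simp
    ring
  · have h1 : n.toNat = 0 := by omega
    have h2 : (-n).toNat = n.natAbs := by omega
    rw [h1, h2]
    have h3 : 2*m + n.natAbs = m + (m + n.natAbs) := by ring
    rw [h3, pow_add]
    simp only [Nat.add_zero]
    field_simp
    ring

lemma hasSum_main (k : ℕ) (t : ℝ) (ht : 0 ≤ t) :
    HasSum (fun n : ℤ => (n : ℝ) ^ (2 * k) * besselI n t) (TT (2*k) t) := by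
  have hsum : Summable (FF (2*k) 0 t) := summable_FF (2*k) 0 t (by norm_num) ht
  have h1 : HasSum (FF (2*k) 0 t) (TT (2*k) t) := hsum.hasSum
  have h2 : HasSum (fun q : ℤ × ℕ => FF (2*k) 0 t (zEquiv q)) (TT (2*k) t) :=
    (Equiv.hasSum_iff zEquiv).mpr h1
  apply HasSum.prod_fiberwise h2
  intro n
  have h3 := (besselI_hasSum n t).mul_left ((n:ℝ)^(2*k))
  have heq : (fun m : ℕ => FF (2*k) 0 t (zEquiv (n, m))) = fun m : ℕ =>
      (n:ℝ)^(2*k) * ((t/2)^(2*m + n.natAbs) / ((m.factorial : ℝ) * (m + n.natAbs).factorial)) :=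
    funext (FF_zEquiv k t n)
  show HasSum (fun m : ℕ => FF (2*k) 0 t (zEquiv (n, m))) _
  rw [heq]
  exact h3

theorem stmt7 (k : ℕ) :
    ∃ P : Polynomial ℝ, P.natDegree = k ∧ (∀ i ∈ P.support, 0 < P.coeff i) ∧
      (k = 0 → P = 1) ∧ (k ≠ 0 → P.eval 0 = 0) ∧
      ∀ t : ℝ, 0 < t →
        HasSum (fun n : ℤ => (n : ℝ) ^ (2 * k) * besselI n t) (Real.exp t * P.eval t) := by
  refine ⟨skelP k, skelP_natDegree k, ?_, ?_, ?_, ?_⟩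
  · intro i hi
    have h1 := (skelP_good k).1 i
    have h2 := Polynomial.mem_support_iff.mp hi
    exact lt_of_le_of_ne h1 (Ne.symm h2)
  · rintro rfl; exact skelP_zero
  · intro hk
    obtain ⟨m, rfl⟩ := Nat.exists_eq_succ_of_ne_zero hk
    rw [← Polynomial.coeff_zero_eq_eval_zero, skelP_succ, Polynomial.mul_coeff_zero]
    simp
  · intro t ht
    have := hasSum_main k t ht.le
    rwa [TT_eval k t ht.le] at this
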